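/- Let u and v be vertices of a colored tree (T, φ) with [B_{n+1}(u)] = [B_{n+1}(v)] but [B_{n+2}(u)] ≠ [B_{n+2}(v)]. Then there exist neighbors u' of u and v' of v such that [B_n(u')] = [B_n(v')] and [B_{n+1}(u')] ≠ [B_{n+1}(v')]. Consequently, for a quasi-Sturmian coloring, the special (n+1)-ball S_{n+1} is strongly adjacent to the special n-ball S_n for every n ≥ N₀. -/

import Mathlib

open SimpleGraph

variable {V A : Type*}

/-- Equivalence of colored `n`-balls: a color-preserving isometry between the balls
of radius `n` centered at `u` and `v`, sending `u` to `v`. -/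
def BallEquiv (G : SimpleGraph V) (φ : V → A) (n : ℕ) (u v : V) : Prop :=
  ∃ f : V → V, f u = v ∧
    (∀ x y : V, G.dist u x ≤ n → G.dist u y ≤ n → G.dist (f x) (f y) = G.dist x y) ∧
    (∀ x : V, G.dist u x ≤ n → φ (f x) = φ x) ∧
    (∀ z : V, G.dist v z ≤ n → ∃ x : V, G.dist u x ≤ n ∧ f x = z)

/-- The factor complexity `b(n)`: the number of classes of colored `n`-balls. -/
noncomputable def complexity (G : SimpleGraph V) (φ : V → A) (n : ℕ) : ℕ :=
  Nat.card (Quot (BallEquiv G φ n))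

/-- The colored `n`-ball at `u` is special: it admits two inequivalent `(n+1)`-extensions. -/
def IsSpecialCenter (G : SimpleGraph V) (φ : V → A) (n : ℕ) (u : V) : Prop :=
  ∃ v, BallEquiv G φ n u v ∧ ¬ BallEquiv G φ (n+1) u v

/-- The type set `Λ_u` of a vertex. -/
def typeSet (G : SimpleGraph V) (φ : V → A) (u : V) : Set ℕ :=
  {n | IsSpecialCenter G φ n u}

/-- Two vertices are in the same class: their colored `n`-balls agree for all `n`. -/
def SameClass (G : SimpleGraph V) (φ : V → A) (u v : V) : Prop :=
  ∀ n, BallEquiv G φ n u v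

/-- `m` is the maximal type of `u`. -/
def MaxType (G : SimpleGraph V) (φ : V → A) (u : V) (m : ℕ) : Prop :=
  m ∈ typeSet G φ u ∧ ∀ k ∈ typeSet G φ u, k ≤ m

/-- Weak adjacency of classes of colored `n`-balls (given by representatives `x`, `y`). -/
def WeakAdj (G : SimpleGraph V) (φ : V → A) (n : ℕ) (x y : V) : Prop :=
  ∃ v w, G.Adj v w ∧ BallEquiv G φ n x v ∧ BallEquiv G φ n y w

/-- Strong adjacency: every ball of the class of `x` has a neighboring ball of the class of `y`. -/
def StrongAdj (G : SimpleGraph V) (φ : V → A) (n : ℕ) (x y : V) : Prop :=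
  ∀ v, BallEquiv G φ n x v → ∃ w, G.Adj v w ∧ BallEquiv G φ n y w

/-- The factor graph `𝒢ₙ` on classes of colored `n`-balls. -/
def FactorGraph (G : SimpleGraph V) (φ : V → A) (n : ℕ) :
    SimpleGraph (Quot (BallEquiv G φ n)) where
  Adj a b := a ≠ b ∧ ∃ u v, G.Adj u v ∧ Quot.mk _ u = a ∧ Quot.mk _ v = b
  symm := ⟨by rintro a b ⟨hne, u, v, h, hu, hv⟩; exact ⟨hne.symm, v, u, h.symm, hv, hu⟩⟩
  loopless := ⟨by rintro a ⟨hne, _⟩; exact hne rfl⟩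

/-- The quotient graph `X = Γ\T` on classes of vertices. -/
def QuotGraph (G : SimpleGraph V) (φ : V → A) :
    SimpleGraph (Quot (SameClass G φ)) where
  Adj a b := a ≠ b ∧ ∃ u v, G.Adj u v ∧ Quot.mk _ u = a ∧ Quot.mk _ v = b
  symm := ⟨by rintro a b ⟨hne, u, v, h, hu, hv⟩; exact ⟨hne.symm, v, u, h.symm, hv, hu⟩⟩
  loopless := ⟨by rintro a ⟨hne, _⟩; exact hne rfl⟩

/-! ### Auxiliary infrastructure: metric lemmas for trees -/

section TreeAux

variable {G : SimpleGraph V} {φ : V → A}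

private lemma path_length_eq_dist (ht : G.IsTree) {x y : V} (p : G.Walk x y) (hp : p.IsPath) :
    p.length = G.dist x y := by
  obtain ⟨q, hq, hql⟩ := ht.isConnected.exists_path_of_dist x y
  have hpq : p = q := (ht.existsUnique_path x y).unique hp hq
  rw [hpq, hql]

private lemma dist_add_of_mem (ht : G.IsTree) {x y z : V} (p : G.Walk x y) (hp : p.IsPath)
    (hz : z ∈ p.support) : G.dist x z + G.dist z y = G.dist x y := by
  classical
  have h1 := path_length_eq_dist ht _ (hp.takeUntil hz)
  have h2 := path_length_eq_dist ht _ (hp.dropUntil hz)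
  have h3 := path_length_eq_dist ht p hp
  have h4 : (p.takeUntil z hz).length + (p.dropUntil z hz).length = p.length := by
    rw [← Walk.length_append, Walk.take_spec]
  omega

/-- For adjacent `c a`, distances from `x` to `c` and `a` differ by exactly one. -/
private lemma dist_adj_cases (ht : G.IsTree) {c a : V} (h : G.Adj c a) (x : V) :
    G.dist x a = G.dist x c + 1 ∨ G.dist x c = G.dist x a + 1 := by
  obtain ⟨p, hp, hl⟩ := ht.isConnected.exists_path_of_dist x a
  by_cases hcs : c ∈ p.support
  · left
    have h1 := dist_add_of_mem ht p hp hcs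
    have h2 : G.dist c a = 1 := dist_eq_one_iff_adj.mpr h
    omega
  · right
    have hp2 : (Walk.cons h p.reverse).IsPath :=
      hp.reverse.cons (by rw [Walk.support_reverse, List.mem_reverse]; exact hcs)
    have h1 := path_length_eq_dist ht _ hp2
    simp only [Walk.length_cons, Walk.length_reverse] at h1
    have h2 : G.dist x c = G.dist c x := G.dist_comm
    omega

private lemma exists_parent (ht : G.IsTree) {c x : V} (hx : x ≠ c) :
    ∃ a, G.Adj c a ∧ G.dist c x = G.dist a x + 1 := by
  obtain ⟨p, hp, hl⟩ := ht.isConnected.exists_path_of_dist c x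
  cases p with
  | nil => exact absurd rfl hx
  | @cons _ a _ hadj q =>
    refine ⟨a, hadj, ?_⟩
    have hq := path_length_eq_dist ht q hp.of_cons
    simp only [Walk.length_cons] at hl
    omega

private lemma parent_unique (ht : G.IsTree) {c a a' x : V} (ha : G.Adj c a) (ha' : G.Adj c a')
    (h1 : G.dist c x = G.dist a x + 1) (h2 : G.dist c x = G.dist a' x + 1) : a = a' := by
  obtain ⟨p, hp, hl⟩ := ht.isConnected.exists_path_of_dist a x
  obtain ⟨p', hp', hl'⟩ := ht.isConnected.exists_path_of_dist a' x
  have hcp : c ∉ p.support := by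
    intro hmem
    have h3 := dist_add_of_mem ht p hp hmem
    have h4 : G.dist a c = 1 := dist_eq_one_iff_adj.mpr ha.symm
    omega
  have hcp' : c ∉ p'.support := by
    intro hmem
    have h3 := dist_add_of_mem ht p' hp' hmem
    have h4 : G.dist a' c = 1 := dist_eq_one_iff_adj.mpr ha'.symm
    omega
  have hP : (Walk.cons ha p).IsPath := hp.cons hcp
  have hP' : (Walk.cons ha' p').IsPath := hp'.cons hcp'
  have heq : Walk.cons ha p = Walk.cons ha' p' := (ht.existsUnique_path c x).unique hP hP'
  have := congrArg (fun w : G.Walk c x => w.getVert 1) heq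
  simpa [Walk.getVert_cons _ _ one_ne_zero, Walk.getVert_zero] using this

/-- Points in distinct branches at `c`: distances add through `c`. -/
private lemma dist_branch_add (ht : G.IsTree) {c a a' x y : V} (ha : G.Adj c a) (ha' : G.Adj c a')
    (hne : a ≠ a') (hx : G.dist c x = G.dist a x + 1) (hy : G.dist c y = G.dist a' y + 1) :
    G.dist x y = G.dist c x + G.dist c y := by
  classical
  obtain ⟨q, hq, hlq⟩ := ht.isConnected.exists_path_of_dist a x
  obtain ⟨q', hq', hlq'⟩ := ht.isConnected.exists_path_of_dist a' y
  have hcq : c ∉ q.support := by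
    intro hmem
    have h3 := dist_add_of_mem ht q hq hmem
    have h4 : G.dist a c = 1 := dist_eq_one_iff_adj.mpr ha.symm
    omega
  have hcq' : c ∉ q'.support := by
    intro hmem
    have h3 := dist_add_of_mem ht q' hq' hmem
    have h4 : G.dist a' c = 1 := dist_eq_one_iff_adj.mpr ha'.symm
    omega
  have hdisj : ∀ z, z ∈ q.support → z ∈ q'.support → False := by
    intro z hz hz'
    have ht1 : ((q.takeUntil z hz).IsPath) := hq.takeUntil hz
    have ht2 : ((q'.takeUntil z hz').IsPath) := hq'.takeUntil hz'
    have hc1 : c ∉ (q.takeUntil z hz).support := fun hm => hcq (q.support_takeUntil_subset hz hm)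
    have hc2 : c ∉ (q'.takeUntil z hz').support :=
      fun hm => hcq' (q'.support_takeUntil_subset hz' hm)
    have hP : (Walk.cons ha (q.takeUntil z hz)).IsPath := ht1.cons hc1
    have hP' : (Walk.cons ha' (q'.takeUntil z hz')).IsPath := ht2.cons hc2
    have heq : Walk.cons ha (q.takeUntil z hz) = Walk.cons ha' (q'.takeUntil z hz') :=
      (ht.existsUnique_path c z).unique hP hP'
    have := congrArg (fun w : G.Walk c z => w.getVert 1) heq
    simp only [Walk.getVert_cons _ _ one_ne_zero, Nat.sub_self, Walk.getVert_zero] at this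
    exact hne this
  set P : G.Walk c x := Walk.cons ha q with hPdef
  set P' : G.Walk c y := Walk.cons ha' q' with hP'def
  have hPpath : P.IsPath := hq.cons hcq
  have hP'path : P'.IsPath := hq'.cons hcq'
  have hW : (P.reverse.append P').IsPath := by
    rw [Walk.isPath_def, Walk.support_append]
    have h1 : P.reverse.support.Nodup := by
      rw [Walk.support_reverse]; exact List.nodup_reverse.mpr (Walk.isPath_def _ |>.mp hPpath)
    have h2 : P'.support.tail.Nodup := by
      have := (Walk.isPath_def _ |>.mp hP'path)
      exact this.tail
    refine List.Nodup.append h1 h2 ?_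
    intro z hz1 hz2
    rw [Walk.support_reverse, List.mem_reverse] at hz1
    have hz2' : z ∈ q'.support := by
      simpa [hP'def, Walk.support_cons] using hz2
    rw [hPdef, Walk.support_cons, List.mem_cons] at hz1
    rcases hz1 with rfl | hz1
    · exact hcq' hz2'
    · exact hdisj z hz1 hz2'
  have hlen := path_length_eq_dist ht _ hW
  rw [Walk.length_append, Walk.length_reverse] at hlen
  simp only [hPdef, hP'def, Walk.length_cons] at hlen
  omega

/-- If `x` is in the branch of `a` at `c`, and `a'` is another neighbor of `c`,
then `x` is "outward" from `a'`. -/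
private lemma dist_other_branch (ht : G.IsTree) {c a a' x : V} (ha : G.Adj c a) (ha' : G.Adj c a')
    (hne : a ≠ a') (hx : G.dist c x = G.dist a x + 1) : G.dist a' x = G.dist c x + 1 := by
  have e1 : G.dist x a' = G.dist a' x := G.dist_comm
  have e2 : G.dist x c = G.dist c x := G.dist_comm
  rcases dist_adj_cases ht ha' x with h | h
  · omega
  · exact absurd (parent_unique ht ha ha' hx (by omega)) hne

end TreeAux

/-! ### Sector equivalences -/

/-- `x` lies in the sector at `a` pointing away from `c` (for adjacent `c a`),
within distance `m` of `a`. -/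
def InSec (G : SimpleGraph V) (m : ℕ) (c a x : V) : Prop :=
  G.dist a x ≤ m ∧ G.dist c x = G.dist a x + 1

/-- A color-preserving isometry between the sector at `a` away from `c` and the sector
at `b` away from `c'`, of depth `m`, sending `a` to `b`. -/
def SecEquiv (G : SimpleGraph V) (φ : V → A) (m : ℕ) (c a c' b : V) (h : V → V) : Prop :=
  h a = b ∧
  (∀ x y, InSec G m c a x → InSec G m c a y → G.dist (h x) (h y) = G.dist x y) ∧
  (∀ x, InSec G m c a x → φ (h x) = φ x) ∧
  (∀ x, InSec G m c a x → InSec G m c' b (h x)) ∧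
  (∀ z, InSec G m c' b z → ∃ x, InSec G m c a x ∧ h x = z)

/-- Partial inverse by choice. -/
noncomputable def pinv (P : V → Prop) (f : V → V) (d : V) : V → V :=
  fun z => @dite V (∃ x, P x ∧ f x = z) (Classical.propDecidable _) (fun h => h.choose)
    (fun _ => d)

lemma pinv_spec {P : V → Prop} {f : V → V} {d z : V} (h : ∃ x, P x ∧ f x = z) :
    P (pinv P f d z) ∧ f (pinv P f d z) = z := by
  unfold pinv
  rw [dif_pos h]
  exact h.choose_spec

section SecLemmas

variable {G : SimpleGraph V} {φ : V → A}

lemma secEquiv_inv (hc : G.Connected) {m : ℕ} {c a c' b : V} {h : V → V}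
    (hca : G.dist c a = 1) (hs : SecEquiv G φ m c a c' b h) :
    SecEquiv G φ m c' b c a (pinv (InSec G m c a) h a) := by
  obtain ⟨hab, hdist, hcol, hmem, hsur⟩ := hs
  have hroot : InSec G m c a a :=
    ⟨by rw [SimpleGraph.dist_self]; omega, by rw [SimpleGraph.dist_self]; omega⟩
  have hinj : ∀ x y, InSec G m c a x → InSec G m c a y → h x = h y → x = y := by
    intro x y hx hy he
    have h1 := hdist x y hx hy
    rw [he] at h1
    simp only [SimpleGraph.dist_self] at h1
    exact (hc.dist_eq_zero_iff.mp h1.symm)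
  have hspec : ∀ z, InSec G m c' b z →
      InSec G m c a (pinv (InSec G m c a) h a z) ∧ h (pinv (InSec G m c a) h a z) = z :=
    fun z hz => pinv_spec (hsur z hz)
  have hbmem : InSec G m c' b b := by
    have h0 := hmem a hroot
    rwa [hab] at h0
  refine ⟨?_, ?_, ?_, ?_, ?_⟩
  · have hsp := hspec b hbmem
    exact hinj _ _ hsp.1 hroot (hsp.2.trans hab.symm)
  · intro z z' hz hz'
    have h1 := hspec z hz
    have h2 := hspec z' hz'
    have h3 := hdist _ _ h1.1 h2.1
    rw [h1.2, h2.2] at h3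
    exact h3.symm
  · intro z hz
    have h1 := hspec z hz
    have h3 := hcol _ h1.1
    rw [h1.2] at h3
    exact h3.symm
  · intro z hz
    exact (hspec z hz).1
  · intro x hx
    refine ⟨h x, hmem x hx, ?_⟩
    have h1 := hspec (h x) (hmem x hx)
    exact hinj _ _ h1.1 hx h1.2

lemma secEquiv_comp {m : ℕ} {c a c' b c'' e : V} {f g : V → V}
    (h1 : SecEquiv G φ m c a c' b f) (h2 : SecEquiv G φ m c' b c'' e g) :
    SecEquiv G φ m c a c'' e (g ∘ f) := by
  obtain ⟨hab1, hdist1, hcol1, hmem1, hsur1⟩ := h1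
  obtain ⟨hab2, hdist2, hcol2, hmem2, hsur2⟩ := h2
  refine ⟨?_, ?_, ?_, ?_, ?_⟩
  · simp [Function.comp, hab1, hab2]
  · intro x y hx hy
    simp only [Function.comp]
    rw [hdist2 _ _ (hmem1 x hx) (hmem1 y hy), hdist1 x y hx hy]
  · intro x hx
    simp only [Function.comp]
    rw [hcol2 _ (hmem1 x hx), hcol1 x hx]
  · intro x hx
    exact hmem2 _ (hmem1 x hx)
  · intro z hz
    obtain ⟨y, hy, hy2⟩ := hsur2 z hz
    obtain ⟨x, hx, hx2⟩ := hsur1 y hy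
    exact ⟨x, hx, by simp [Function.comp, hx2, hy2]⟩

/-- A ball equivalence of radius `M` at `cc` induces sector equivalences on sectors
contained in the ball. -/
lemma secEquiv_of_ball (hc : G.Connected) {M m : ℕ} {cc : V} {f : V → V}
    (hdist : ∀ x y, G.dist cc x ≤ M → G.dist cc y ≤ M → G.dist (f x) (f y) = G.dist x y)
    (hcol : ∀ x, G.dist cc x ≤ M → φ (f x) = φ x)
    (hsur : ∀ z, G.dist (f cc) z ≤ M → ∃ x, G.dist cc x ≤ M ∧ f x = z)
    {c₀ a₀ : V} (h2 : G.dist cc c₀ ≤ M) (h3 : G.dist cc a₀ + m ≤ M) :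
    SecEquiv G φ m c₀ a₀ (f c₀) (f a₀) f := by
  have hball : ∀ x, InSec G m c₀ a₀ x → G.dist cc x ≤ M := by
    intro x hx
    calc G.dist cc x ≤ G.dist cc a₀ + G.dist a₀ x := hc.dist_triangle
    _ ≤ M := by have := hx.1; omega
  have ha₀ : G.dist cc a₀ ≤ M := by omega
  refine ⟨rfl, ?_, ?_, ?_, ?_⟩
  · intro x y hx hy
    exact hdist x y (hball x hx) (hball y hy)
  · intro x hx
    exact hcol x (hball x hx)
  · intro x hx
    constructor
    · rw [hdist a₀ x ha₀ (hball x hx)]; exact hx.1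
    · rw [hdist c₀ x h2 (hball x hx), hdist a₀ x ha₀ (hball x hx)]; exact hx.2
  · intro z hz
    have hz' : G.dist (f cc) z ≤ M := by
      have e1 : G.dist (f cc) (f a₀) = G.dist cc a₀ := hdist cc a₀ (by rw [SimpleGraph.dist_self]; omega) ha₀
      calc G.dist (f cc) z ≤ G.dist (f cc) (f a₀) + G.dist (f a₀) z := hc.dist_triangle
      _ ≤ M := by rw [e1]; have := hz.1; omega
    obtain ⟨x, hx, hfx⟩ := hsur z hz'
    refine ⟨x, ⟨?_, ?_⟩, hfx⟩
    · rw [← hdist a₀ x ha₀ hx, hfx]; exact hz.1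
    · have e1 : G.dist (f c₀) (f x) = G.dist c₀ x := hdist c₀ x h2 hx
      have e2 : G.dist (f a₀) (f x) = G.dist a₀ x := hdist a₀ x ha₀ hx
      rw [hfx] at e1 e2
      rw [← e1, ← e2]; exact hz.2

end SecLemmas

/-! ### Gluing sector equivalences into a ball equivalence -/

section Glue

variable {G : SimpleGraph V} {φ : V → A}

lemma glue_secEquiv (ht : G.IsTree) {m : ℕ} {c c' : V} (hφ : φ c = φ c')
    (Θ : V → V) (H : V → V → V)
    (hadj : ∀ a, G.Adj c a → G.Adj c' (Θ a))
    (hsec : ∀ a, G.Adj c a → SecEquiv G φ m c a c' (Θ a) (H a))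
    (hinj : ∀ a a', G.Adj c a → G.Adj c a' → Θ a = Θ a' → a = a')
    (hsur : ∀ b, G.Adj c' b → ∃ a, G.Adj c a ∧ Θ a = b) :
    BallEquiv G φ (m + 1) c c' := by
  classical
  have hc := ht.isConnected
  set par : V → V := fun x =>
    if h : ∃ a, G.Adj c a ∧ G.dist c x = G.dist a x + 1 then h.choose else c with hpardef
  have hparspec : ∀ x, x ≠ c → G.Adj c (par x) ∧ G.dist c x = G.dist (par x) x + 1 := by
    intro x hx
    have hex : ∃ a, G.Adj c a ∧ G.dist c x = G.dist a x + 1 := exists_parent ht hx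
    simp only [hpardef, dif_pos hex]
    exact hex.choose_spec
  set F : V → V := fun x => if x = c then c' else H (par x) x with hFdef
  have hFc : F c = c' := by simp only [hFdef, if_pos rfl]
  have hFne : ∀ x, x ≠ c → F x = H (par x) x := fun x hx => by simp only [hFdef, if_neg hx]
  have hInSec : ∀ x, x ≠ c → G.dist c x ≤ m + 1 → InSec G m c (par x) x := by
    intro x hx hdx
    obtain ⟨h1, h2⟩ := hparspec x hx
    exact ⟨by omega, h2⟩
  have hroot : ∀ a, G.Adj c a → InSec G m c a a := by
    intro a ha
    have h1 : G.dist c a = 1 := SimpleGraph.dist_eq_one_iff_adj.mpr ha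
    exact ⟨by rw [SimpleGraph.dist_self]; omega, by rw [SimpleGraph.dist_self]; omega⟩
  have hkey : ∀ x, x ≠ c → G.dist c x ≤ m + 1 →
      InSec G m c' (Θ (par x)) (F x) ∧ G.dist c' (F x) = G.dist c x := by
    intro x hx hdx
    obtain ⟨hpa, hpd⟩ := hparspec x hx
    have hxin := hInSec x hx hdx
    obtain ⟨hH1, hH2, hH3, hH4, hH5⟩ := hsec (par x) hpa
    have hmem : InSec G m c' (Θ (par x)) (F x) := by rw [hFne x hx]; exact hH4 x hxin
    refine ⟨hmem, ?_⟩
    have e1 : G.dist (H (par x) (par x)) (H (par x) x) = G.dist (par x) x :=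
      hH2 _ _ (hroot _ hpa) hxin
    rw [hH1] at e1
    have e2 := hmem.2
    rw [hFne x hx] at e2 ⊢
    omega
  refine ⟨F, hFc, ?_, ?_, ?_⟩
  · -- distances
    intro x y hdx hdy
    by_cases hx : x = c
    · by_cases hy : y = c
      · rw [hx, hy, hFc, SimpleGraph.dist_self, SimpleGraph.dist_self]
      · have hk := hkey y hy (hx ▸ hdy)
        rw [hx, hFc]
        exact hk.2
    · by_cases hy : y = c
      · have hk := hkey x hx (hy ▸ hdx)
        rw [hy, hFc, SimpleGraph.dist_comm (u := F x) (v := c'),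
          SimpleGraph.dist_comm (u := x) (v := c)]
        exact hk.2
      · obtain ⟨hpa, hpd⟩ := hparspec x hx
        obtain ⟨hqa, hqd⟩ := hparspec y hy
        have hxin := hInSec x hx hdx
        have hyin := hInSec y hy hdy
        by_cases hpq : par x = par y
        · obtain ⟨hH1, hH2, hH3, hH4, hH5⟩ := hsec (par x) hpa
          rw [hFne x hx, hFne y hy, ← hpq]
          exact hH2 x y hxin (hpq ▸ hyin)
        · have hΘ : Θ (par x) ≠ Θ (par y) := fun h => hpq (hinj _ _ hpa hqa h)
          have hd1 := dist_branch_add ht hpa hqa hpq hpd hqd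
          have hkx := hkey x hx hdx
          have hky := hkey y hy hdy
          have hd2 := dist_branch_add ht (hadj _ hpa) (hadj _ hqa) hΘ hkx.1.2 hky.1.2
          rw [hd1, hd2, hkx.2, hky.2]
  · -- colors
    intro x hdx
    by_cases hx : x = c
    · rw [hx, hFc]; exact hφ.symm
    · obtain ⟨hpa, hpd⟩ := hparspec x hx
      obtain ⟨hH1, hH2, hH3, hH4, hH5⟩ := hsec (par x) hpa
      rw [hFne x hx]
      exact hH3 x (hInSec x hx hdx)
  · -- surjectivity
    intro z hdz
    by_cases hz : z = c'
    · exact ⟨c, by rw [SimpleGraph.dist_self]; omega, by rw [hFc, hz]⟩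
    · obtain ⟨b, hb, hbd⟩ := exists_parent ht hz
      obtain ⟨a, ha, hΘa⟩ := hsur b hb
      obtain ⟨hH1, hH2, hH3, hH4, hH5⟩ := hsec a ha
      have hzin : InSec G m c' (Θ a) z := ⟨by rw [hΘa]; omega, by rw [hΘa]; exact hbd⟩
      obtain ⟨x, hxin, hxz⟩ := hH5 z hzin
      have hxc : x ≠ c := by
        intro h
        have h2 := hxin.2
        rw [h, SimpleGraph.dist_self] at h2
        omega
      have hpx : par x = a := by
        obtain ⟨hpa, hpd⟩ := hparspec x hxc
        exact parent_unique ht hpa ha hpd hxin.2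
      refine ⟨x, by have h1 := hxin.1; have h2 := hxin.2; omega, ?_⟩
      rw [hFne x hxc, hpx]
      exact hxz

end Glue


/-! ### The side-correction (swap) lemma -/

section SectorFix

variable {G : SimpleGraph V} {φ : V → A}

lemma sector_fix (ht : G.IsTree) {n : ℕ} {u a v b w : V} {f g : V → V}
    (hua : G.Adj u a) (hvb : G.Adj v b) (hbw : G.Adj b w)
    (hFfull : SecEquiv G φ (n+1) u a w b g)
    (hFau : SecEquiv G φ n a u b w g)
    (hFav : SecEquiv G φ n a u b v f) :
    ∃ h, SecEquiv G φ (n+1) u a v b h := by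
  classical
  have hc := ht.isConnected
  by_cases hwv : w = v
  · exact ⟨g, hwv ▸ hFfull⟩
  have hdau : G.dist a u = 1 := SimpleGraph.dist_eq_one_iff_adj.mpr hua.symm
  have hdbv : G.dist b v = 1 := SimpleGraph.dist_eq_one_iff_adj.mpr hvb.symm
  have hdbw : G.dist b w = 1 := SimpleGraph.dist_eq_one_iff_adj.mpr hbw
  set finv := pinv (InSec G n a u) f u with hfinvdef
  have hFinv : SecEquiv G φ n b v a u finv := secEquiv_inv hc hdau hFav
  set ginv := pinv (InSec G n a u) g u with hginvdef
  have hGinv : SecEquiv G φ n b w a u ginv := secEquiv_inv hc hdau hFau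
  have hσ : SecEquiv G φ n b v b w (g ∘ finv) := secEquiv_comp hFinv hFau
  have hτ : SecEquiv G φ n b w b v (f ∘ ginv) := secEquiv_comp hGinv hFav
  obtain ⟨hσ1, hσ2, hσ3, hσ4, hσ5⟩ := hσ
  obtain ⟨hτ1, hτ2, hτ3, hτ4, hτ5⟩ := hτ
  simp only [Function.comp_apply] at hσ1 hσ2 hσ3 hσ4 hσ5 hτ1 hτ2 hτ3 hτ4 hτ5
  obtain ⟨hfu1, hfu2, hfu3, hfu4, hfu5⟩ := hFfull
  set s : V → V := fun z => if InSec G n b v z then g (finv z) else z with hsdef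
  have hvv : InSec G n b v v :=
    ⟨by rw [SimpleGraph.dist_self]; omega, by rw [SimpleGraph.dist_self]; omega⟩
  have hbb_notv : ¬ InSec G n b v b := by
    rintro ⟨-, h2⟩
    rw [SimpleGraph.dist_self] at h2
    omega
  have hsb : s b = b := by simp only [hsdef, if_neg hbb_notv]
  -- distance-to-root preservation for the swapped sector
  have hσdist : ∀ z, InSec G n b v z →
      G.dist b (g (finv z)) = G.dist b z ∧ InSec G n b w (g (finv z)) := by
    intro z hzv
    have hσz := hσ4 z hzv
    have hd0 := hσ2 z v hzv hvv
    rw [hσ1] at hd0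
    have h1 := hσz.2
    have h2 := hzv.2
    have e1 : G.dist v z = G.dist z v := SimpleGraph.dist_comm
    have e2 : G.dist w (g (finv z)) = G.dist (g (finv z)) w := SimpleGraph.dist_comm
    exact ⟨by omega, hσz⟩
  -- C1 : s maps the w-avoiding sector to the v-avoiding sector
  have hC1 : ∀ z, InSec G (n+1) w b z →
      InSec G (n+1) v b (s z) ∧ G.dist b (s z) = G.dist b z ∧ φ (s z) = φ z := by
    intro z hz
    by_cases hzv : InSec G n b v z
    · have hsz : s z = g (finv z) := by simp only [hsdef, if_pos hzv]
      obtain ⟨hdb, hσz⟩ := hσdist z hzv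
      have hout : G.dist v (g (finv z)) = G.dist b (g (finv z)) + 1 :=
        dist_other_branch ht hbw hvb.symm hwv hσz.2
      rw [hsz]
      exact ⟨⟨by have := hz.1; omega, hout⟩, hdb, hσ3 z hzv⟩
    · have hsz : s z = z := by simp only [hsdef, if_neg hzv]
      rw [hsz]
      refine ⟨⟨hz.1, ?_⟩, rfl, rfl⟩
      rcases dist_adj_cases ht hvb.symm z with hcase | hcase
      · have e1 : G.dist z v = G.dist v z := SimpleGraph.dist_comm
        have e2 : G.dist z b = G.dist b z := SimpleGraph.dist_comm
        omega
      · exfalso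
        have e1 : G.dist z v = G.dist v z := SimpleGraph.dist_comm
        have e2 : G.dist z b = G.dist b z := SimpleGraph.dist_comm
        have h1 := hz.1
        exact hzv ⟨by omega, by omega⟩
  -- mixed distances
  have hCmix : ∀ z z', InSec G n b v z → InSec G (n+1) w b z' → ¬ InSec G n b v z' →
      G.dist (g (finv z)) (s z') = G.dist z z' := by
    intro z z' hzv hz' hz'v
    have hsz' : s z' = z' := by simp only [hsdef, if_neg hz'v]
    rw [hsz']
    obtain ⟨hdb, hσz⟩ := hσdist z hzv
    by_cases hz'b : z' = b
    · rw [hz'b]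
      have e1 : G.dist (g (finv z)) b = G.dist b (g (finv z)) := SimpleGraph.dist_comm
      have e2 : G.dist z b = G.dist b z := SimpleGraph.dist_comm
      omega
    · obtain ⟨a₂, ha₂, hda₂⟩ := exists_parent ht hz'b
      have hz'out : G.dist v z' = G.dist b z' + 1 := by
        rcases dist_adj_cases ht hvb.symm z' with hcase | hcase
        · have e1 : G.dist z' v = G.dist v z' := SimpleGraph.dist_comm
          have e2 : G.dist z' b = G.dist b z' := SimpleGraph.dist_comm
          omega
        · exfalso
          have e1 : G.dist z' v = G.dist v z' := SimpleGraph.dist_comm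
          have e2 : G.dist z' b = G.dist b z' := SimpleGraph.dist_comm
          have h1 := hz'.1
          exact hz'v ⟨by omega, by omega⟩
      have ha₂v : a₂ ≠ v := by
        intro h
        rw [h] at hda₂
        omega
      have ha₂w : a₂ ≠ w := by
        intro h
        rw [h] at hda₂
        have h1 := hz'.2
        omega
      have e1 := dist_branch_add ht hvb.symm ha₂ (Ne.symm ha₂v) hzv.2 hda₂
      have e2 := dist_branch_add ht hbw ha₂ (Ne.symm ha₂w) hσz.2 hda₂
      omega
  -- C2 : s preserves pairwise distances on the w-avoiding sector
  have hC2 : ∀ z z', InSec G (n+1) w b z → InSec G (n+1) w b z' →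
      G.dist (s z) (s z') = G.dist z z' := by
    intro z z' hz hz'
    by_cases hzv : InSec G n b v z
    · have h1 : s z = g (finv z) := by simp only [hsdef, if_pos hzv]
      by_cases hz'v : InSec G n b v z'
      · have h2 : s z' = g (finv z') := by simp only [hsdef, if_pos hz'v]
        rw [h1, h2]
        exact hσ2 z z' hzv hz'v
      · rw [h1]
        exact hCmix z z' hzv hz' hz'v
    · have h1 : s z = z := by simp only [hsdef, if_neg hzv]
      by_cases hz'v : InSec G n b v z'
      · have h2 : s z' = g (finv z') := by simp only [hsdef, if_pos hz'v]
        rw [h1, h2]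
        have h3 := hCmix z' z hz'v hz hzv
        rw [show s z = z from by simp only [hsdef, if_neg hzv]] at h3
        rw [SimpleGraph.dist_comm (u := z) (v := g (finv z')),
          SimpleGraph.dist_comm (u := z) (v := z')]
        exact h3
      · have h2 : s z' = z' := by simp only [hsdef, if_neg hz'v]
        rw [h1, h2]
  -- C3 : s is onto the v-avoiding sector
  have hC3 : ∀ z'', InSec G (n+1) v b z'' → ∃ z, InSec G (n+1) w b z ∧ s z = z'' := by
    intro z'' hz''
    by_cases hz''w : InSec G n b w z''
    · have hτz : InSec G n b v (f (ginv z'')) := hτ4 z'' hz''w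
      have hmem : InSec G (n+1) w b (f (ginv z'')) := by
        refine ⟨by have := hτz.2; have := hτz.1; omega, ?_⟩
        exact dist_other_branch ht hvb.symm hbw (fun h => hwv h.symm) hτz.2
      refine ⟨f (ginv z''), hmem, ?_⟩
      have hs1 : s (f (ginv z'')) = g (finv (f (ginv z''))) := by
        simp only [hsdef, if_pos hτz]
      obtain ⟨hau1, hau2, hau3, hau4, hau5⟩ := hFau
      obtain ⟨hav1, hav2, hav3, hav4, hav5⟩ := hFav
      have hg0 : InSec G n a u (ginv z'') ∧ g (ginv z'') = z'' := by
        rw [hginvdef]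
        exact pinv_spec (hau5 z'' hz''w)
      have hfinv0 : finv (f (ginv z'')) = ginv z'' := by
        rw [hfinvdef]
        have hspec := pinv_spec (P := InSec G n a u) (f := f) (d := u)
          ⟨ginv z'', hg0.1, rfl⟩
        have hd := hav2 _ _ hspec.1 hg0.1
        rw [hspec.2] at hd
        simp only [SimpleGraph.dist_self] at hd
        exact hc.dist_eq_zero_iff.mp hd.symm
      rw [hs1, hfinv0, hg0.2]
    · by_cases hz''b : z'' = b
      · refine ⟨b, ⟨by rw [SimpleGraph.dist_self]; omega, ?_⟩, by rw [hsb, hz''b]⟩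
        rw [SimpleGraph.dist_self]
        have e : G.dist w b = G.dist b w := SimpleGraph.dist_comm
        omega
      · have hznotv : ¬ InSec G n b v z'' := by
          rintro ⟨-, h2⟩
          have h3 := hz''.2
          omega
        have hout : G.dist w z'' = G.dist b z'' + 1 := by
          rcases dist_adj_cases ht hbw z'' with hcase | hcase
          · have e1 : G.dist z'' w = G.dist w z'' := SimpleGraph.dist_comm
            have e2 : G.dist z'' b = G.dist b z'' := SimpleGraph.dist_comm
            omega
          · exfalso
            have e1 : G.dist z'' w = G.dist w z'' := SimpleGraph.dist_comm
            have e2 : G.dist z'' b = G.dist b z'' := SimpleGraph.dist_comm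
            apply hz''w
            exact ⟨by have := hz''.1; omega, by omega⟩
        exact ⟨z'', ⟨hz''.1, hout⟩, by simp only [hsdef, if_neg hznotv]⟩
  refine ⟨s ∘ g, ?_, ?_, ?_, ?_, ?_⟩
  · simp only [Function.comp_apply, hfu1, hsb]
  · intro x y hx hy
    simp only [Function.comp_apply]
    rw [hC2 _ _ (hfu4 x hx) (hfu4 y hy), hfu2 x y hx hy]
  · intro x hx
    simp only [Function.comp_apply]
    rw [(hC1 _ (hfu4 x hx)).2.2, hfu3 x hx]
  · intro x hx
    exact (hC1 _ (hfu4 x hx)).1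
  · intro z'' hz''
    obtain ⟨z, hz, hsz⟩ := hC3 z'' hz''
    obtain ⟨x, hx, hgx⟩ := hfu5 z hz
    exact ⟨x, hx, by simp only [Function.comp_apply]; rw [hgx, hsz]⟩

end SectorFix

/-! ### Basic operations on ball equivalences -/

section BallOps

variable {G : SimpleGraph V} {φ : V → A}

lemma ballEquiv_symm (hc : G.Connected) {n : ℕ} {u v : V} (h : BallEquiv G φ n u v) :
    BallEquiv G φ n v u := by
  obtain ⟨f, hfu, hfd, hfc, hfs⟩ := h
  have hinj : ∀ x y, G.dist u x ≤ n → G.dist u y ≤ n → f x = f y → x = y := by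
    intro x y hx hy he
    have h1 := hfd x y hx hy
    rw [he] at h1
    simp only [SimpleGraph.dist_self] at h1
    exact hc.dist_eq_zero_iff.mp h1.symm
  have hspec : ∀ z, G.dist v z ≤ n →
      G.dist u (pinv (fun x => G.dist u x ≤ n) f u z) ≤ n ∧
        f (pinv (fun x => G.dist u x ≤ n) f u z) = z :=
    fun z hz => pinv_spec (hfs z hz)
  have hu0 : G.dist u u ≤ n := by rw [SimpleGraph.dist_self]; omega
  have hv0 : G.dist v v ≤ n := by rw [SimpleGraph.dist_self]; omega
  refine ⟨pinv (fun x => G.dist u x ≤ n) f u, ?_, ?_, ?_, ?_⟩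
  · have hsp := hspec v hv0
    exact hinj _ _ hsp.1 hu0 (hsp.2.trans hfu.symm)
  · intro x y hx hy
    have h1 := hspec x hx
    have h2 := hspec y hy
    have h3 := hfd _ _ h1.1 h2.1
    rw [h1.2, h2.2] at h3
    exact h3.symm
  · intro x hx
    have h1 := hspec x hx
    have h3 := hfc _ h1.1
    rw [h1.2] at h3
    exact h3.symm
  · intro z hz
    have hm : G.dist v (f z) ≤ n := by
      have h0 := hfd u z hu0 hz
      rw [← hfu, h0]
      exact hz
    have h1 := hspec (f z) hm
    exact ⟨f z, hm, hinj _ _ h1.1 hz h1.2⟩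

lemma ballEquiv_trans {n : ℕ} {u v w : V} (h1 : BallEquiv G φ n u v)
    (h2 : BallEquiv G φ n v w) : BallEquiv G φ n u w := by
  obtain ⟨f, hfu, hfd, hfc, hfs⟩ := h1
  obtain ⟨g, hgv, hgd, hgc, hgs⟩ := h2
  have hu0 : G.dist u u ≤ n := by rw [SimpleGraph.dist_self]; omega
  have hmem : ∀ x, G.dist u x ≤ n → G.dist v (f x) ≤ n := by
    intro x hx
    have h0 := hfd u x hu0 hx
    rw [← hfu, h0]
    exact hx
  refine ⟨g ∘ f, ?_, ?_, ?_, ?_⟩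
  · simp only [Function.comp_apply, hfu, hgv]
  · intro x y hx hy
    simp only [Function.comp_apply]
    rw [hgd _ _ (hmem x hx) (hmem y hy), hfd x y hx hy]
  · intro x hx
    simp only [Function.comp_apply]
    rw [hgc _ (hmem x hx), hfc x hx]
  · intro z hz
    obtain ⟨y, hy, hy2⟩ := hgs z hz
    obtain ⟨x, hx, hx2⟩ := hfs y hy
    exact ⟨x, hx, by simp only [Function.comp_apply]; rw [hx2, hy2]⟩

end BallOps

/-! ### Part 1: descending inequivalence to neighbors -/

section PartOne

variable {G : SimpleGraph V} {φ : V → A}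

lemma part_one (ht : G.IsTree) (n : ℕ) (u v : V) (h1 : BallEquiv G φ (n+1) u v)
    (h2 : ¬ BallEquiv G φ (n+2) u v) :
    ∃ u' v', G.Adj u u' ∧ G.Adj v v' ∧ BallEquiv G φ n u' v' ∧
      ¬ BallEquiv G φ (n+1) u' v' := by
  classical
  have hc := ht.isConnected
  by_contra hcon
  push_neg at hcon
  obtain ⟨f, hfu, hfd, hfc, hfs⟩ := h1
  have hu0 : G.dist u u ≤ n + 1 := by rw [SimpleGraph.dist_self]; omega
  have hadjmap : ∀ a, G.Adj u a → G.Adj v (f a) := by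
    intro a ha
    have hda : G.dist u a = 1 := SimpleGraph.dist_eq_one_iff_adj.mpr ha
    have h0 := hfd u a hu0 (by omega)
    rw [hfu] at h0
    exact SimpleGraph.dist_eq_one_iff_adj.mp (by rw [h0]; exact hda)
  have key : ∀ a, G.Adj u a → ∃ h, SecEquiv G φ (n+1) u a v (f a) h := by
    intro a ha
    have hda : G.dist u a = 1 := SimpleGraph.dist_eq_one_iff_adj.mpr ha
    have hba : G.Adj v (f a) := hadjmap a ha
    have hres : BallEquiv G φ n a (f a) := by
      have hsub : ∀ x, G.dist a x ≤ n → G.dist u x ≤ n + 1 := by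
        intro x hx
        calc G.dist u x ≤ G.dist u a + G.dist a x := hc.dist_triangle
        _ ≤ n + 1 := by omega
      refine ⟨f, rfl, ?_, ?_, ?_⟩
      · intro x y hx hy
        exact hfd x y (hsub x hx) (hsub y hy)
      · intro x hx
        exact hfc x (hsub x hx)
      · intro z hz
        have hdz : G.dist v z ≤ n + 1 := by
          have e1 : G.dist v (f a) = 1 := SimpleGraph.dist_eq_one_iff_adj.mpr hba
          calc G.dist v z ≤ G.dist v (f a) + G.dist (f a) z := hc.dist_triangle
          _ ≤ n + 1 := by omega
        obtain ⟨x, hx, hfx⟩ := hfs z hdz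
        refine ⟨x, ?_, hfx⟩
        have e2 := hfd a x (by omega) hx
        rw [hfx] at e2
        omega
    obtain ⟨g, hga, hgd, hgc, hgs⟩ := hcon a (f a) ha hba hres
    have hdau : G.dist a u ≤ n + 1 := by rw [SimpleGraph.dist_comm]; omega
    have hbw : G.Adj (f a) (g u) := by
      have e0 := hgd a u (by rw [SimpleGraph.dist_self]; omega) hdau
      rw [hga] at e0
      refine SimpleGraph.dist_eq_one_iff_adj.mp ?_
      rw [e0, SimpleGraph.dist_comm]
      exact hda
    have hFfull : SecEquiv G φ (n+1) u a (g u) (g a) g :=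
      secEquiv_of_ball hc hgd hgc
        (fun z hz => hgs z (by rwa [← hga])) hdau
        (by rw [SimpleGraph.dist_self]; omega)
    rw [hga] at hFfull
    have hFau : SecEquiv G φ n a u (g a) (g u) g :=
      secEquiv_of_ball hc hgd hgc
        (fun z hz => hgs z (by rwa [← hga]))
        (by rw [SimpleGraph.dist_self]; omega)
        (by rw [SimpleGraph.dist_comm]; omega)
    rw [hga] at hFau
    have hFav : SecEquiv G φ n a u (f a) (f u) f :=
      secEquiv_of_ball hc hfd hfc
        (fun z hz => hfs z (by rwa [hfu] at hz))
        (by omega)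
        (by rw [SimpleGraph.dist_self]; omega)
    rw [hfu] at hFav
    exact sector_fix ht ha hba hbw hFfull hFau hFav
  choose Hfun hHfun using key
  apply h2
  have hphi : φ u = φ v := by
    have h0 := hfc u hu0
    rw [hfu] at h0
    exact h0.symm
  have hinj' : ∀ a a', G.Adj u a → G.Adj u a' → f a = f a' → a = a' := by
    intro a a' ha ha' he
    have e1 := hfd a a'
      (by have := SimpleGraph.dist_eq_one_iff_adj.mpr ha; omega)
      (by have := SimpleGraph.dist_eq_one_iff_adj.mpr ha'; omega)
    rw [he] at e1
    simp only [SimpleGraph.dist_self] at e1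
    exact hc.dist_eq_zero_iff.mp e1.symm
  have hsur' : ∀ b, G.Adj v b → ∃ a, G.Adj u a ∧ f a = b := by
    intro b hb
    have hdb : G.dist v b = 1 := SimpleGraph.dist_eq_one_iff_adj.mpr hb
    obtain ⟨x, hx, hfx⟩ := hfs b (by omega)
    have e1 := hfd u x hu0 hx
    rw [hfu, hfx] at e1
    exact ⟨x, SimpleGraph.dist_eq_one_iff_adj.mp (by omega), hfx⟩
  exact glue_secEquiv ht hphi f
    (fun a => if ha : G.Adj u a then Hfun a ha else id)
    hadjmap
    (fun a ha => by simp only [dif_pos ha]; exact hHfun a ha)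
    hinj' hsur'

end PartOne

/-- If `[B_{n+1}(u)] = [B_{n+1}(v)]` but `[B_{n+2}(u)] ≠ [B_{n+2}(v)]`, then some
neighbors `u'` of `u` and `v'` of `v` satisfy `[B_n(u')] = [B_n(v')]` and
`[B_{n+1}(u')] ≠ [B_{n+1}(v')]`. Consequently, for a quasi-Sturmian coloring, the special
`(n+1)`-ball `S_{n+1}` is strongly adjacent to the special `n`-ball `S_n` for `n ≥ N₀`. -/
theorem special_succ_strongly_adjacent_special {V A : Type*} (G : SimpleGraph V)
    [G.LocallyFinite] (φ : V → A) [Finite A] (d : ℕ) (hd : 2 ≤ d)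
    (htree : G.IsTree) (hreg : ∀ v : V, G.degree v = d)
    (hsurj : Function.Surjective φ)
    (N₀ c : ℕ) (hQS : ∀ n, N₀ ≤ n → complexity G φ n = n + c) :
    (∀ (n : ℕ) (u v : V), BallEquiv G φ (n + 1) u v → ¬ BallEquiv G φ (n + 2) u v →
      ∃ u' v' : V, G.Adj u u' ∧ G.Adj v v' ∧
        BallEquiv G φ n u' v' ∧ ¬ BallEquiv G φ (n + 1) u' v') ∧
    (∀ n : ℕ, N₀ ≤ n → ∀ s : V, IsSpecialCenter G φ (n + 1) s →
      ∀ x : V, BallEquiv G φ (n + 1) s x →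
        ∃ y : V, G.Adj x y ∧ IsSpecialCenter G φ n y) := by
  have hc := htree.isConnected
  constructor
  · intro n u v h1 h2
    exact part_one htree n u v h1 h2
  · intro n _hn s hs x hx
    obtain ⟨t, hst1, hst2⟩ := hs
    by_cases hxt : BallEquiv G φ (n+2) x t
    · have hxs1 : BallEquiv G φ (n+1) x s := ballEquiv_symm hc hx
      have hxs2 : ¬ BallEquiv G φ (n+2) x s := fun h =>
        hst2 (ballEquiv_trans (ballEquiv_symm hc h) hxt)
      obtain ⟨x', s', hxx', _, hb, hnb⟩ := part_one htree n x s hxs1 hxs2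
      exact ⟨x', hxx', s', hb, hnb⟩
    · have hxt1 : BallEquiv G φ (n+1) x t := ballEquiv_trans (ballEquiv_symm hc hx) hst1
      obtain ⟨x', t', hxx', _, hb, hnb⟩ := part_one htree n x t hxt1 hxt
      exact ⟨x', hxx', t', hb, hnb⟩
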